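/- Let ρ : 𝕊^n₊ → ℝ be a C^1 function with 0 < c ≤ ρ ≤ C and ‖∇_τ ρ‖_{C^0} ≤ L, where c > L. Define Φ_ρ(x) = ρ(x)x for x ∈ 𝕊^n₊. Then for all x, y ∈ 𝕊^n₊ one has the two-sided bound (c − L)|y−x| ≤ |Φ_ρ(y) − Φ_ρ(x)| ≤ (C + L)|y−x|. -/

import Mathlib

open MeasureTheory Metric Filter
open scoped RealInnerProductSpace ENNReal

noncomputable section

abbrev Euc (m : ℕ) := EuclideanSpace ℝ (Fin m)

/-- Tangential gradient along the unit sphere: projection of the ambient gradient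
of (an extension of) `f` onto the tangent space of the sphere at `x`. -/
noncomputable def tangGrad {m : ℕ} (f : Euc m → ℝ) (x : Euc m) : Euc m :=
  gradient f x - ⟪gradient f x, x⟫ • x

/-- The closed upper unit hemisphere in `ℝ^{n+1}`. -/
def upperHemi (n : ℕ) : Set (Euc (n+1)) := {x | ‖x‖ = 1 ∧ 0 ≤ x (Fin.last n)}

open Real in
set_option maxHeartbeats 1000000 in
/-- Lipschitz estimate along the hemisphere. -/
lemma hemi_lip {n : ℕ} {ρ : Euc (n+1) → ℝ} (hρ : ContDiff ℝ 1 ρ) {L : ℝ} (hL0 : 0 ≤ L)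
    (hgrad : ∀ z ∈ upperHemi n, ‖tangGrad ρ z‖ ≤ L) :
    ∀ x ∈ upperHemi n, ∀ y ∈ upperHemi n, |ρ y - ρ x| ≤ (π/2) * L * ‖y - x‖ := by
  intro x hx y hy
  by_cases hxy : x = y
  · subst hxy; simp
  have hx1 : ‖x‖ = 1 := hx.1
  have hy1 : ‖y‖ = 1 := hy.1
  have hxx : ⟪x, x⟫ = 1 := by
    rw [real_inner_self_eq_norm_sq, hx1]; norm_num
  have hyy : ⟪y, y⟫ = 1 := by
    rw [real_inner_self_eq_norm_sq, hy1]; norm_num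
  have habs : |⟪x, y⟫| ≤ 1 := by
    have := abs_real_inner_le_norm x y
    rwa [hx1, hy1, one_mul] at this
  have hm1 : -1 ≤ ⟪x, y⟫ := neg_le_of_abs_le habs
  have hp1 : ⟪x, y⟫ ≤ 1 := le_of_abs_le habs
  set θ := Real.arccos ⟪x, y⟫ with hθdef
  have hθ0 : 0 ≤ θ := Real.arccos_nonneg _
  have hθπ : θ ≤ π := Real.arccos_le_pi _
  have hcos : Real.cos θ = ⟪x, y⟫ := Real.cos_arccos hm1 hp1
  -- construct the tangent direction v
  obtain ⟨v, hv1, hxv, hyv, hhemi⟩ :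
      ∃ v : Euc (n+1), ‖v‖ = 1 ∧ ⟪x, v⟫ = 0 ∧
        y = Real.cos θ • x + Real.sin θ • v ∧
        ∀ t ∈ Set.Icc (0:ℝ) θ, 0 ≤ (Real.cos t • x + Real.sin t • v) (Fin.last n) := by
    by_cases hθpi : θ = π
    · -- antipodal case
      have hcosval : ⟪x, y⟫ = -1 := by rw [← hcos, hθpi, Real.cos_pi]
      have hsum : ‖y + x‖ ^ 2 = 0 := by
        rw [norm_add_sq_real, real_inner_comm, hcosval, hx1, hy1]; ring
      have hyx : y = -x :=
        eq_neg_of_add_eq_zero_left (norm_eq_zero.mp (pow_eq_zero_iff two_ne_zero |>.mp hsum))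
      have hyl : y (Fin.last n) = -(x (Fin.last n)) := by rw [hyx]; rfl
      have hxl : x (Fin.last n) = 0 := by
        have h1 := hx.2
        have h2 := hy.2
        rw [hyl] at h2
        linarith
      refine ⟨EuclideanSpace.single (Fin.last n) 1, ?_, ?_, ?_, ?_⟩
      · simp [EuclideanSpace.norm_single]
      · rw [EuclideanSpace.inner_single_right]
        simp [hxl]
      · rw [hθpi, Real.cos_pi, Real.sin_pi, hyx]
        module
      · intro t ht
        rw [hθpi] at ht
        have hs : 0 ≤ Real.sin t := Real.sin_nonneg_of_nonneg_of_le_pi ht.1 ht.2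
        simp only [PiLp.add_apply, PiLp.smul_apply, smul_eq_mul, hxl,
          EuclideanSpace.single_apply, if_pos rfl]
        simpa using hs
    · -- non-antipodal case
      have hθlt : θ < π := lt_of_le_of_ne hθπ hθpi
      have hθpos : 0 < θ := by
        rcases eq_or_lt_of_le hθ0 with h | h
        · exfalso
          have hci : ⟪x, y⟫ = 1 := by rw [← hcos, ← h, Real.cos_zero]
          have : ‖y - x‖ ^ 2 = 0 := by
            rw [norm_sub_sq_real, real_inner_comm, hci, hx1, hy1]; ring
          exact hxy (sub_eq_zero.mp (norm_eq_zero.mp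
            (pow_eq_zero_iff two_ne_zero |>.mp this))).symm
        · exact h
      have hsin : 0 < Real.sin θ := Real.sin_pos_of_pos_of_lt_pi hθpos hθlt
      have hnv2 : ‖y - Real.cos θ • x‖ ^ 2 = Real.sin θ ^ 2 := by
        rw [norm_sub_sq_real, real_inner_smul_right, norm_smul, hy1, hx1,
          Real.norm_eq_abs]
        nlinarith [Real.sin_sq_add_cos_sq θ, sq_abs (Real.cos θ), hcos,
          real_inner_comm y x]
      have hnv : ‖y - Real.cos θ • x‖ = Real.sin θ := by
        calc ‖y - Real.cos θ • x‖ = √(‖y - Real.cos θ • x‖ ^ 2) :=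
              (Real.sqrt_sq (norm_nonneg _)).symm
          _ = √(Real.sin θ ^ 2) := by rw [hnv2]
          _ = Real.sin θ := Real.sqrt_sq hsin.le
      refine ⟨(Real.sin θ)⁻¹ • (y - Real.cos θ • x), ?_, ?_, ?_, ?_⟩
      · rw [norm_smul, hnv, Real.norm_eq_abs, abs_of_pos (by positivity)]
        field_simp
      · rw [real_inner_smul_right, inner_sub_right, real_inner_smul_right, hxx, hcos]
        ring
      · rw [smul_smul, mul_inv_cancel₀ hsin.ne', one_smul]
        module
      · intro t ht
        have hl : (Real.cos t • x + Real.sin t • ((Real.sin θ)⁻¹ • (y - Real.cos θ • x)))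
            (Fin.last n) = (Real.sin θ)⁻¹ * (Real.sin (θ - t) * x (Fin.last n)
              + Real.sin t * y (Fin.last n)) := by
          simp only [PiLp.add_apply, PiLp.smul_apply, PiLp.sub_apply, smul_eq_mul]
          rw [Real.sin_sub]
          field_simp
          ring
        rw [hl]
        have h1 : 0 ≤ Real.sin (θ - t) :=
          Real.sin_nonneg_of_nonneg_of_le_pi (by linarith [ht.2]) (by linarith [ht.1])
        have h2 : 0 ≤ Real.sin t :=
          Real.sin_nonneg_of_nonneg_of_le_pi ht.1 (by linarith [ht.2])
        have := hx.2; have := hy.2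
        positivity
  -- the geodesic
  set γ : ℝ → Euc (n+1) := fun t => Real.cos t • x + Real.sin t • v with hγdef
  set γ' : ℝ → Euc (n+1) := fun t => (-Real.sin t) • x + Real.cos t • v with hγ'def
  have hvv : ⟪v, v⟫ = 1 := by
    rw [real_inner_self_eq_norm_sq, hv1]; norm_num
  have hvx : ⟪v, x⟫ = 0 := by rw [real_inner_comm]; exact hxv
  have hγnorm : ∀ t, ‖γ t‖ = 1 := by
    intro t
    have h2 : ‖γ t‖ ^ 2 = 1 := by
      rw [hγdef]
      simp only [norm_add_sq_real, real_inner_smul_left, real_inner_smul_right,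
        norm_smul, Real.norm_eq_abs, hxv]
      rw [hx1, hv1]
      simp [mul_pow, sq_abs]
    calc ‖γ t‖ = √(‖γ t‖ ^ 2) := (Real.sqrt_sq (norm_nonneg _)).symm
      _ = 1 := by rw [h2, Real.sqrt_one]
  have hγmem : ∀ t ∈ Set.Icc (0:ℝ) θ, γ t ∈ upperHemi n := by
    intro t ht
    exact ⟨hγnorm t, hhemi t ht⟩
  have hγ' : ∀ t, HasDerivAt γ (γ' t) t := by
    intro t
    exact ((Real.hasDerivAt_cos t).smul_const x).add ((Real.hasDerivAt_sin t).smul_const v)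
  have horth : ∀ t, ⟪γ t, γ' t⟫ = 0 := by
    intro t
    rw [hγdef, hγ'def]
    simp only [inner_add_left, inner_add_right, real_inner_smul_left, real_inner_smul_right,
      hxx, hvv, hxv, hvx]
    ring
  have hγ'norm : ∀ t, ‖γ' t‖ = 1 := by
    intro t
    have h2 : ‖γ' t‖ ^ 2 = 1 := by
      rw [hγ'def]
      simp only [norm_add_sq_real, real_inner_smul_left, real_inner_smul_right,
        norm_smul, Real.norm_eq_abs, hxv]
      rw [hx1, hv1]
      simp [mul_pow, sq_abs]
    calc ‖γ' t‖ = √(‖γ' t‖ ^ 2) := (Real.sqrt_sq (norm_nonneg _)).symm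
      _ = 1 := by rw [h2, Real.sqrt_one]
  have hdiff : Differentiable ℝ ρ := hρ.differentiable one_ne_zero
  have hg : ∀ t, HasDerivAt (fun s => ρ (γ s)) ⟪gradient ρ (γ t), γ' t⟫ t := by
    intro t
    have h1 := ((hdiff (γ t)).hasGradientAt.hasFDerivAt).comp_hasDerivAt t (hγ' t)
    rw [InnerProductSpace.toDual_apply_apply] at h1
    exact h1
  have hbound : ∀ t ∈ Set.Ico (0:ℝ) θ, ‖⟪gradient ρ (γ t), γ' t⟫‖ ≤ L := by
    intro t ht
    have hmem := hγmem t ⟨ht.1, ht.2.le⟩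
    have heq : ⟪gradient ρ (γ t), γ' t⟫ = ⟪tangGrad ρ (γ t), γ' t⟫ := by
      unfold tangGrad
      rw [inner_sub_left, real_inner_smul_left, horth t, mul_zero, sub_zero]
    rw [heq, Real.norm_eq_abs]
    calc |⟪tangGrad ρ (γ t), γ' t⟫| ≤ ‖tangGrad ρ (γ t)‖ * ‖γ' t‖ :=
          abs_real_inner_le_norm _ _
      _ = ‖tangGrad ρ (γ t)‖ := by rw [hγ'norm t, mul_one]
      _ ≤ L := hgrad _ hmem
  have hmvt := norm_image_sub_le_of_norm_deriv_le_segment'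
    (f := fun s => ρ (γ s)) (f' := fun t => ⟪gradient ρ (γ t), γ' t⟫)
    (fun t _ => (hg t).hasDerivWithinAt) hbound θ ⟨hθ0, le_refl θ⟩
  have hγ0 : γ 0 = x := by rw [hγdef]; simp
  have hγθ : γ θ = y := by rw [hγdef]; exact hyv.symm
  have hmvt' : |ρ y - ρ x| ≤ L * θ := by
    simpa [hγθ, hγ0, Real.norm_eq_abs] using hmvt
  -- Jordan inequality and chord length
  have hj : θ ≤ π * Real.sin (θ/2) := by
    have h1 := Real.mul_le_sin (x := θ/2) (by linarith) (by linarith)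
    have hπ := Real.pi_pos
    rw [div_mul_eq_mul_div, mul_comm] at h1
    calc θ = π * (θ / 2 * 2 / π) := by field_simp
      _ ≤ π * Real.sin (θ/2) := by
          apply mul_le_mul_of_nonneg_left _ hπ.le
          calc θ / 2 * 2 / π = 2 / π * (θ/2) := by ring
            _ ≤ Real.sin (θ/2) := Real.mul_le_sin (by linarith) (by linarith)
  have hs2 : 0 ≤ Real.sin (θ/2) := Real.sin_nonneg_of_nonneg_of_le_pi (by linarith) (by linarith)
  have hchord : ‖y - x‖ = 2 * Real.sin (θ/2) := by
    have h2 : ‖y - x‖ ^ 2 = 2 - 2 * Real.cos θ := by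
      rw [norm_sub_sq_real, real_inner_comm, ← hcos, hx1, hy1]; ring
    have h3 : Real.sin (θ/2) ^ 2 = 1/2 - Real.cos θ / 2 := by
      have := Real.sin_sq_eq_half_sub (θ/2)
      rwa [show 2 * (θ/2) = θ by ring] at this
    calc ‖y - x‖ = √(‖y - x‖ ^ 2) := (Real.sqrt_sq (norm_nonneg _)).symm
      _ = √((2 * Real.sin (θ/2)) ^ 2) := by
            rw [h2]; congr 1; linear_combination (-4 : ℝ) * h3
      _ = 2 * Real.sin (θ/2) := Real.sqrt_sq (by positivity)
  have hfin : L * θ ≤ π/2 * L * ‖y - x‖ := by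
    rw [hchord]
    calc L * θ ≤ L * (π * Real.sin (θ/2)) := mul_le_mul_of_nonneg_left hj hL0
      _ = π/2 * L * (2 * Real.sin (θ/2)) := by ring
  linarith [hmvt']

set_option maxHeartbeats 1000000 in
/-- bi-Lipschitz bounds for the radial graph map `Φ_ρ(x) = ρ(x)x`
over the upper hemisphere. -/
theorem stmt2 (n : ℕ) (ρ : Euc (n+1) → ℝ) (hρ : ContDiff ℝ 1 ρ)
    (c C L : ℝ) (hc : 0 < c) (hLc : L < c)
    (hlow : ∀ x ∈ upperHemi n, c ≤ ρ x) (hup : ∀ x ∈ upperHemi n, ρ x ≤ C)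
    (hgrad : ∀ x ∈ upperHemi n, ‖tangGrad ρ x‖ ≤ L) :
    ∀ x ∈ upperHemi n, ∀ y ∈ upperHemi n,
      (c - L) * ‖y - x‖ ≤ ‖ρ y • y - ρ x • x‖ ∧
      ‖ρ y • y - ρ x • x‖ ≤ (C + L) * ‖y - x‖ := by
  have he : EuclideanSpace.single (Fin.last n) (1:ℝ) ∈ upperHemi n := by
    constructor
    · simp [EuclideanSpace.norm_single]
    · simp [EuclideanSpace.single_apply]
  have hL0 : 0 ≤ L := le_trans (norm_nonneg _) (hgrad _ he)
  have hcC : c ≤ C := le_trans (hlow _ he) (hup _ he)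
  have hlip := hemi_lip hρ hL0 hgrad
  intro x hx y hy
  have hx1 : ‖x‖ = 1 := hx.1
  have hy1 : ‖y‖ = 1 := hy.1
  have hcx := hlow x hx; have hCx := hup x hx
  have hcy := hlow y hy; have hCy := hup y hy
  set D := ‖y - x‖ with hD
  set N := ‖ρ y • y - ρ x • x‖ with hN
  have hD0 : 0 ≤ D := norm_nonneg _
  have hN0 : 0 ≤ N := norm_nonneg _
  have hD2 : D ^ 2 = 2 - 2 * ⟪y, x⟫ := by
    rw [hD, norm_sub_sq_real, hx1, hy1]; ring
  have hN2 : N ^ 2 = (ρ y) ^ 2 + (ρ x) ^ 2 - 2 * (ρ y * ρ x) * ⟪y, x⟫ := by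
    rw [hN, norm_sub_sq_real, real_inner_smul_left, real_inner_smul_right,
      norm_smul, norm_smul, hx1, hy1, Real.norm_eq_abs, Real.norm_eq_abs]
    simp [mul_pow, sq_abs]
    ring
  have hid : N ^ 2 = (ρ y - ρ x) ^ 2 + (ρ x * ρ y) * D ^ 2 := by
    rw [hN2, hD2]; ring
  have hΔ : |ρ y - ρ x| ≤ Real.pi/2 * L * D := hlip x hx y hy
  have hΔ2 : (ρ y - ρ x) ^ 2 ≤ (Real.pi/2 * L * D) ^ 2 := by
    calc (ρ y - ρ x) ^ 2 = |ρ y - ρ x| ^ 2 := (sq_abs _).symm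
      _ ≤ (Real.pi/2 * L * D) ^ 2 := pow_le_pow_left₀ (abs_nonneg _) hΔ 2
  clear_value D N
  constructor
  · -- lower bound
    have hcc : c * c ≤ ρ x * ρ y := mul_le_mul hcx hcy hc.le (le_trans hc.le hcx)
    have h1 : (c * D) ^ 2 ≤ N ^ 2 := by
      rw [hid]
      nlinarith [sq_nonneg (ρ y - ρ x), sq_nonneg D, mul_nonneg (sub_nonneg.mpr hcc) (sq_nonneg D)]
    have h2 : c * D ≤ N := by
      nlinarith [h1, hN0, mul_nonneg hc.le hD0]
    nlinarith [mul_nonneg hL0 hD0]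
  · -- upper bound
    have hLC : L ≤ C := le_trans hLc.le hcC
    have hLL : L * L ≤ L * C := mul_le_mul_of_nonneg_left hLC hL0
    have hπ : Real.pi ≤ 3.15 := Real.pi_lt_d2.le
    have hπ0 := Real.pi_pos
    have hπ2 : Real.pi ^ 2 ≤ 10 := by nlinarith [hπ, hπ0]
    have hπ2L : Real.pi ^ 2 * (L * L) ≤ 10 * (L * L) :=
      mul_le_mul_of_nonneg_right hπ2 (mul_nonneg hL0 hL0)
    have hLC0 : 0 ≤ L * C := le_trans (mul_nonneg hL0 hL0) hLL
    have hkey : (Real.pi/2 * L) ^ 2 ≤ L ^ 2 + 2 * C * L := by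
      have e : (Real.pi/2 * L) ^ 2 = Real.pi ^ 2 * (L * L) / 4 := by ring
      rw [e]; linarith [hπ2L, hLL, hLC0]
    have hCC : ρ x * ρ y ≤ C * C :=
      mul_le_mul hCx hCy (le_trans hc.le hcy) (le_trans hc.le (le_trans hcx hCx))
    have e1 : (Real.pi/2 * L * D) ^ 2 = (Real.pi/2 * L) ^ 2 * D ^ 2 := by ring
    have h4 : (ρ x * ρ y) * D ^ 2 ≤ (C * C) * D ^ 2 :=
      mul_le_mul_of_nonneg_right hCC (sq_nonneg D)
    have h5 : (Real.pi/2 * L) ^ 2 * D ^ 2 ≤ (L ^ 2 + 2 * C * L) * D ^ 2 :=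
      mul_le_mul_of_nonneg_right hkey (sq_nonneg D)
    have h3 : N ^ 2 ≤ ((C + L) * D) ^ 2 := by
      calc N ^ 2 = (ρ y - ρ x) ^ 2 + (ρ x * ρ y) * D ^ 2 := hid
        _ ≤ (L ^ 2 + 2 * C * L) * D ^ 2 + (C * C) * D ^ 2 := by linarith [hΔ2, h4, h5, e1]
        _ = ((C + L) * D) ^ 2 := by ring
    have hCL0 : 0 ≤ C + L := by linarith
    nlinarith [h3, hN0, mul_nonneg hCL0 hD0]
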